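/- Let φ: A → B be a surjective homomorphism of abelian groups, f: 𝔤 → 𝔤̃ a homomorphism of B-graded Lie superalgebras, and (𝔭, Π'), (𝔭̃, Π̃') φ-coverings of 𝔤 and 𝔤̃ respectively. Then there exists a unique A-graded Lie superalgebra homomorphism F: 𝔭 → 𝔭̃ with Π̃' ∘ F = f ∘ Π'. In particular, φ-coverings of a B-graded Lie superalgebra are unique up to isomorphism. -/

import Mathlib

/-- The sign `(-1)^{ij}` for parities `i j : ℤ₂`, as an element of `K`. -/
def ssign (K : Type*) [Field K] (i j : ZMod 2) : K := if i = 1 ∧ j = 1 then -1 else 1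

/-- An `A`-graded Lie superalgebra over `K`, where `A` is an abelian group and the
parities are governed by a group homomorphism `δ : A → ℤ₂`: a grading `p` of the
carrier `L` by submodules whose internal direct sum is `L`, and a bilinear bracket `br`
with `[p a, p b] ⊆ p (a+b)`, super skew-symmetry and the super Jacobi identity
(signs `(-1)^{δ(a)δ(b)}`). -/
structure IsGradedLieSuperAlg (K : Type*) [Field K] {A : Type*} [AddCommGroup A]
    [DecidableEq A] {L : Type*} [AddCommGroup L] [Module K L]
    (δ : A →+ ZMod 2) (p : A → Submodule K L) (br : L → L → L) : Prop where
  add_left : ∀ x x' y, br (x + x') y = br x y + br x' y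
  smul_left : ∀ (c : K) x y, br (c • x) y = c • br x y
  add_right : ∀ x y y', br x (y + y') = br x y + br x y'
  smul_right : ∀ (c : K) x y, br x (c • y) = c • br x y
  internal : DirectSum.IsInternal p
  grade : ∀ a b, ∀ x ∈ p a, ∀ y ∈ p b, br x y ∈ p (a + b)
  skew : ∀ a b, ∀ x ∈ p a, ∀ y ∈ p b, br x y = - ssign K (δ a) (δ b) • br y x
  jacobi : ∀ a b, ∀ x ∈ p a, ∀ y ∈ p b, ∀ z,
    br x (br y z) - ssign K (δ a) (δ b) • br y (br x z) = br (br x y) z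

structure IsCovering (K : Type*) [Field K] {A B : Type*} [AddCommGroup A] [AddCommGroup B]
    {P G : Type*} [AddCommGroup P] [Module K P] [AddCommGroup G] [Module K G]
    (φ : A →+ B) (p : A → Submodule K P) (brp : P → P → P)
    (q : B → Submodule K G) (brg : G → G → G) (prj : P →ₗ[K] G) : Prop where
  hom : ∀ x y, prj (brp x y) = brg (prj x) (prj y)
  maps : ∀ a, ∀ x ∈ p a, prj x ∈ q (φ a)
  inj : ∀ a, ∀ x ∈ p a, prj x = 0 → x = 0
  surj : ∀ a, ∀ y ∈ q (φ a), ∃ x ∈ p a, prj x = y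

namespace Stmt13

/-- Let `φ : A → B` be a surjective homomorphism of abelian groups,
`f : 𝔤 → 𝔤̃` a homomorphism of `B`-graded Lie superalgebras, and `(𝔭, Π')`, `(𝔭̃, Π̃')`
`φ`-coverings of `𝔤` and `𝔤̃` respectively.  Then there exists a unique `A`-graded Lie
superalgebra homomorphism `F : 𝔭 → 𝔭̃` with `Π̃' ∘ F = f ∘ Π'`.  (In particular,
`φ`-coverings of a `B`-graded Lie superalgebra are unique up to isomorphism.) -/
theorem covering_functorial
    {K : Type*} [Field K] {A B : Type*} [AddCommGroup A] [AddCommGroup B]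
    [DecidableEq A] [DecidableEq B]
    {P G P' G' : Type*} [AddCommGroup P] [Module K P] [AddCommGroup G] [Module K G]
    [AddCommGroup P'] [Module K P'] [AddCommGroup G'] [Module K G']
    (δ : B →+ ZMod 2) (φ : A →+ B) (hφ : Function.Surjective φ)
    (q : B → Submodule K G) (brg : G → G → G)
    (hg : IsGradedLieSuperAlg K δ q brg)
    (q' : B → Submodule K G') (brg' : G' → G' → G')
    (hg' : IsGradedLieSuperAlg K δ q' brg')
    (p : A → Submodule K P) (brp : P → P → P)
    (hp : IsGradedLieSuperAlg K (δ.comp φ) p brp)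
    (prj : P →ₗ[K] G) (hcov : IsCovering K φ p brp q brg prj)
    (p' : A → Submodule K P') (brp' : P' → P' → P')
    (hp' : IsGradedLieSuperAlg K (δ.comp φ) p' brp')
    (prj' : P' →ₗ[K] G') (hcov' : IsCovering K φ p' brp' q' brg' prj')
    (f : G →ₗ[K] G')
    (hfhom : ∀ x y, f (brg x y) = brg' (f x) (f y))
    (hfgr : ∀ b : B, ∀ y ∈ q b, f y ∈ q' b) :
    ∃! F : P →ₗ[K] P',
      (∀ a : A, ∀ x ∈ p a, F x ∈ p' a) ∧
      (∀ x y, F (brp x y) = brp' (F x) (F y)) ∧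
      (∀ x, prj' (F x) = f (prj x)) := by
  classical
  -- `prj'` restricts to a bijection `p' a ≃ q' (φ a)`
  have hrestr_bij : ∀ a : A, Function.Bijective
      (LinearMap.codRestrict (q' (φ a)) (prj' ∘ₗ (p' a).subtype)
        (fun x => hcov'.maps a x.1 x.2)) := by
    intro a
    constructor
    · intro x y hxy
      have hval : prj' (x : P') = prj' (y : P') := congrArg Subtype.val hxy
      have := hcov'.inj a ((x : P') - (y : P')) (sub_mem x.2 y.2)
        (by rw [map_sub, hval, sub_self])
      exact Subtype.ext (sub_eq_zero.mp this)
    · intro y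
      obtain ⟨x, hx, hxy⟩ := hcov'.surj a y.1 y.2
      exact ⟨⟨x, hx⟩, Subtype.ext hxy⟩
  let eqv : ∀ a : A, (p' a) ≃ₗ[K] (q' (φ a)) := fun a =>
    LinearEquiv.ofBijective _ (hrestr_bij a)
  let g : ∀ a : A, (p a) →ₗ[K] (q' (φ a)) := fun a =>
    LinearMap.codRestrict _ ((f ∘ₗ prj) ∘ₗ (p a).subtype)
      (fun x => hfgr _ _ (hcov.maps a x.1 x.2))
  let Fa : ∀ a : A, (p a) →ₗ[K] (p' a) := fun a => (eqv a).symm.toLinearMap ∘ₗ g a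
  have hFa : ∀ a (x : p a), prj' (Fa a x : P') = f (prj x) := by
    intro a x
    exact congrArg Subtype.val ((eqv a).apply_symm_apply (g a x))
  let e : DirectSum A (fun a => p a) ≃ₗ[K] P := LinearEquiv.ofBijective (DirectSum.coeLinearMap p) hp.internal
  let F : P →ₗ[K] P' :=
    (DirectSum.toModule K A P' (fun a => (p' a).subtype ∘ₗ Fa a)) ∘ₗ e.symm.toLinearMap
  have hFmem : ∀ a x (hx : x ∈ p a), F x = (Fa a ⟨x, hx⟩ : P') := by
    intro a x hx
    have he : e.symm x = DirectSum.of (fun a => p a) a ⟨x, hx⟩ := by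
      rw [LinearEquiv.symm_apply_eq]
      exact (DirectSum.coeLinearMap_of p a ⟨x, hx⟩).symm
    show (DirectSum.toModule K A P' (fun a => (p' a).subtype ∘ₗ Fa a)) (e.symm x) = _
    rw [he, ← DirectSum.lof_eq_of K, DirectSum.toModule_lof]
    rfl
  have htop : ∀ x : P, x ∈ ⨆ a, p a := by
    rw [hp.internal.submodule_iSup_eq_top]; intro x; trivial
  have hFgr : ∀ a : A, ∀ x ∈ p a, F x ∈ p' a := by
    intro a x hx
    rw [hFmem a x hx]
    exact (Fa a ⟨x, hx⟩).2
  have hFprj : ∀ x, prj' (F x) = f (prj x) := by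
    intro x
    refine Submodule.iSup_induction (motive := fun x => prj' (F x) = f (prj x)) p (htop x) ?_ ?_ ?_
    · intro a x hx; rw [hFmem a x hx, hFa]
    · simp
    · intro x y hx hy; simp [map_add, hx, hy]
  -- zero lemmas for brackets
  have hz_left : ∀ y, brp (0 : P) y = 0 := fun y => by
    have := hp.smul_left 0 0 y; simpa using this
  have hz_right : ∀ x, brp x (0 : P) = 0 := fun x => by
    have := hp.smul_right 0 x 0; simpa using this
  have hz_left' : ∀ y, brp' (0 : P') y = 0 := fun y => by
    have := hp'.smul_left 0 0 y; simpa using this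
  have hz_right' : ∀ x, brp' x (0 : P') = 0 := fun x => by
    have := hp'.smul_right 0 x 0; simpa using this
  have hbr : ∀ x y, F (brp x y) = brp' (F x) (F y) := by
    intro x
    refine Submodule.iSup_induction
      (motive := fun x => ∀ y, F (brp x y) = brp' (F x) (F y)) p (htop x) ?_ ?_ ?_
    · intro a x hx y
      refine Submodule.iSup_induction
        (motive := fun y => F (brp x y) = brp' (F x) (F y)) p (htop y) ?_ ?_ ?_
      · intro b y hy
        have h1 : brp x y ∈ p (a + b) := hp.grade a b x hx y hy
        have h2 : brp' (F x) (F y) ∈ p' (a + b) :=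
          hp'.grade a b _ (hFgr a x hx) _ (hFgr b y hy)
        have h3 : F (brp x y) ∈ p' (a + b) := hFgr _ _ h1
        have hkey : prj' (F (brp x y) - brp' (F x) (F y)) = 0 := by
          rw [map_sub, hFprj, hcov.hom, hfhom, ← hFprj x, ← hFprj y, ← hcov'.hom, sub_self]
        exact sub_eq_zero.mp (hcov'.inj (a + b) _ (sub_mem h3 h2) hkey)
      · simp [hz_right, hz_right']
      · intro y1 y2 hy1 hy2
        rw [hp.add_right, map_add, hy1, hy2, map_add, hp'.add_right]
    · intro y; simp [hz_left, hz_left']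
    · intro x1 x2 hx1 hx2 y
      rw [hp.add_left, map_add, hx1 y, hx2 y, map_add, hp'.add_left]
  refine ⟨F, ⟨hFgr, hbr, hFprj⟩, ?_⟩
  rintro F' ⟨h1, _, h3⟩
  apply LinearMap.ext
  intro x
  refine Submodule.iSup_induction (motive := fun x => F' x = F x) p (htop x) ?_ ?_ ?_
  · intro a x hx
    have hmem : F' x - F x ∈ p' a := sub_mem (h1 a x hx) (hFgr a x hx)
    have : prj' (F' x - F x) = 0 := by rw [map_sub, h3, hFprj, sub_self]
    exact sub_eq_zero.mp (hcov'.inj a _ hmem this)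
  · simp
  · intro x y hx hy; simp [map_add, hx, hy]


end Stmt13
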